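/- arXiv:2408.04155 — 4 statements merged into one kernel-verified Lean document; each statement's English description precedes it below -/
import Mathlib

section
/- Let T be a self-adjoint, injective, positive, bounded linear operator on a Hilbert space H. Then for every f ∈ H, ⟨f, T f⟩ = sup over g ∈ range(T^{1/2}) of [⟨g, f⟩ + ⟨f, g⟩ − ‖T^{-1/2} g‖²], where T^{-1/2} g is the unique element h with T^{1/2} h = g. -/
open ContinuousLinearMap

/-- Variational formula: for a bounded, self-adjoint, injective, positive operator `T`
with positive square root `S`, `⟨f, T f⟩` is the supremum over `g ∈ range S`
(written `g = S h`, with `h = T^{-1/2} g` the unique preimage) of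
`⟨g, f⟩ + ⟨f, g⟩ − ‖T^{-1/2} g‖²`. -/
theorem stmt6 {H : Type*} [NormedAddCommGroup H] [InnerProductSpace ℝ H] [CompleteSpace H]
    (T S : H →L[ℝ] H) (hT : T.IsPositive) (hTinj : Function.Injective T)
    (hS : S.IsPositive) (hSsq : S ∘L S = T) :
    ∀ f : H,
      IsLUB {r : ℝ | ∃ h : H,
          r = (inner ℝ (S h) f : ℝ) + (inner ℝ f (S h) : ℝ) - ‖h‖ ^ 2}
        ((inner ℝ f (T f) : ℝ)) := by
  intro f
  have hsym : ∀ x y : H, (inner ℝ (S x) y : ℝ) = inner ℝ x (S y) := fun x y =>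
    hS.1 x y
  have hTf : (inner ℝ f (T f) : ℝ) = ‖S f‖ ^ 2 := by
    rw [← hSsq]
    simp only [coe_comp', Function.comp_apply]
    rw [← hsym, real_inner_self_eq_norm_sq]
  have key : ∀ h : H, (inner ℝ (S h) f : ℝ) + (inner ℝ f (S h) : ℝ) - ‖h‖ ^ 2
      = ‖S f‖ ^ 2 - ‖h - S f‖ ^ 2 := by
    intro h
    have h1 : (inner ℝ (S h) f : ℝ) = inner ℝ h (S f) := hsym h f
    have h2 : (inner ℝ f (S h) : ℝ) = inner ℝ h (S f) := by
      rw [real_inner_comm]; exact hsym h f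
    rw [h1, h2, ← real_inner_self_eq_norm_sq, ← real_inner_self_eq_norm_sq,
      ← real_inner_self_eq_norm_sq]
    simp [inner_sub_sub_self, real_inner_comm h (S f)]
    rw [norm_sub_sq_real]
    ring
  apply IsGreatest.isLUB
  constructor
  · exact ⟨S f, by rw [key, hTf]; simp⟩
  · rintro r ⟨h, rfl⟩
    rw [key, hTf]
    nlinarith [sq_nonneg ‖h - S f‖]
end

section
/- Let T and N be injective, self-adjoint, positive, bounded linear operators on a Hilbert space H. If range(T^{1/2}) ⊆ range(N^{1/2}) and for every g ∈ range(T^{1/2}) we have ‖N^{-1/2} g‖ ≤ ‖T^{-1/2} g‖, then ⟨f, T f⟩ ≤ ⟨f, N f⟩ for every f ∈ H. -/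
open ContinuousLinearMap

/-- Lemma 6.5 (Mira–Geyer): if `T`, `N` are injective self-adjoint positive bounded
operators with positive square roots `ST`, `SN`, `range ST ⊆ range SN`, and the unique
preimages satisfy `‖N^{-1/2} g‖ ≤ ‖T^{-1/2} g‖` for all `g ∈ range ST`, then
`⟨f, T f⟩ ≤ ⟨f, N f⟩` for every `f`. -/
theorem stmt7 {H : Type*} [NormedAddCommGroup H] [InnerProductSpace ℝ H] [CompleteSpace H]
    (T N ST SN : H →L[ℝ] H)
    (hT : T.IsPositive) (hTinj : Function.Injective T)
    (hN : N.IsPositive) (hNinj : Function.Injective N)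
    (hST : ST.IsPositive) (hSTsq : ST ∘L ST = T)
    (hSN : SN.IsPositive) (hSNsq : SN ∘L SN = N)
    (hrange : Set.range ST ⊆ Set.range SN)
    (hnorm : ∀ h h' : H, SN h' = ST h → ‖h'‖ ≤ ‖h‖) :
    ∀ f : H, (inner ℝ f (T f) : ℝ) ≤ (inner ℝ f (N f) : ℝ) := by
  have hSTsym := hST.1
  have hSNsym := hSN.1
  have key : ∀ x : H, ‖ST x‖ ≤ ‖SN x‖ := by
    intro x
    obtain ⟨x', hx'⟩ := hrange (Set.mem_range_self x)
    obtain ⟨y, hy⟩ := hrange (Set.mem_range_self (SN x'))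
    have hy' : ‖y‖ ≤ ‖ST x‖ := by
      have := hnorm (SN x') y hy
      rwa [hx'] at this
    have hsq : ‖ST x‖ ^ 2 ≤ ‖ST x‖ * ‖SN x‖ := by
      have h1 : (inner ℝ (ST x) (ST x) : ℝ) = inner ℝ y (SN x) := by
        calc (inner ℝ (ST x) (ST x) : ℝ) = inner ℝ (SN x') (ST x) := by rw [hx']
          _ = inner ℝ (ST (SN x')) x := (hSTsym (SN x') x).symm
          _ = inner ℝ (SN y) x := by rw [hy]
          _ = inner ℝ y (SN x) := hSNsym y x
      have h2 : (inner ℝ y (SN x) : ℝ) ≤ ‖y‖ * ‖SN x‖ := real_inner_le_norm y (SN x)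
      have h3 : ‖y‖ * ‖SN x‖ ≤ ‖ST x‖ * ‖SN x‖ :=
        mul_le_mul_of_nonneg_right hy' (norm_nonneg _)
      calc ‖ST x‖ ^ 2 = (inner ℝ (ST x) (ST x) : ℝ) := by
            rw [real_inner_self_eq_norm_sq]
        _ ≤ ‖ST x‖ * ‖SN x‖ := h1 ▸ (h2.trans h3)
    rcases eq_or_lt_of_le (norm_nonneg (ST x)) with h0 | h0
    · rw [← h0]; exact norm_nonneg _
    · have := hsq
      rw [sq] at this
      exact le_of_mul_le_mul_left this h0
  intro f
  have hTf : (inner ℝ f (T f) : ℝ) = ‖ST f‖ ^ 2 := by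
    rw [← hSTsq]
    calc (inner ℝ f (ST (ST f)) : ℝ) = inner ℝ (ST f) (ST f) := (hSTsym f (ST f)).symm
      _ = ‖ST f‖ ^ 2 := real_inner_self_eq_norm_sq _
  have hNf : (inner ℝ f (N f) : ℝ) = ‖SN f‖ ^ 2 := by
    rw [← hSNsq]
    calc (inner ℝ f (SN (SN f)) : ℝ) = inner ℝ (SN f) (SN f) := (hSNsym f (SN f)).symm
      _ = ‖SN f‖ ^ 2 := real_inner_self_eq_norm_sq _
  rw [hTf, hNf]
  exact pow_le_pow_left₀ (norm_nonneg _) (key f) 2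
end

section
/- Let P be a Markov kernel reversible with respect to π, and suppose −1 is an eigenvalue of the induced operator P̂ on L²₀(π). Then P is periodic: there exist disjoint measurable sets S₁, S₂ with π(S₁), π(S₂) > 0 such that P(x, S₂) = 1 for π-a.e. x ∈ S₁ and P(x, S₁) = 1 for π-a.e. x ∈ S₂. -/
open MeasureTheory ProbabilityTheory

/-- If `P` is a Markov kernel reversible with respect to `π` and `−1` is an eigenvalue
of the induced operator on `L²₀(π)`, then `P` is periodic: there are disjoint sets
`S₁, S₂` of positive measure with `P(x, S₂) = 1` for a.e. `x ∈ S₁` and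
`P(x, S₁) = 1` for a.e. `x ∈ S₂`. -/
theorem stmt10 {X : Type*} [MeasurableSpace X] (π : Measure X) [IsProbabilityMeasure π]
    (P : Kernel X X) [IsMarkovKernel P]
    (hrev : ∀ A B : Set X, MeasurableSet A → MeasurableSet B →
      ∫ x in A, (P x B).toReal ∂π = ∫ x in B, (P x A).toReal ∂π)
    (f : X → ℝ) (hf : MemLp f 2 π) (hf0 : ∫ x, f x ∂π = 0)
    (hfne : ¬ f =ᵐ[π] (fun _ => (0 : ℝ)))
    (heig : (fun x => ∫ y, f y ∂(P x)) =ᵐ[π] (fun x => -f x)) :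
    ∃ S₁ S₂ : Set X, MeasurableSet S₁ ∧ MeasurableSet S₂ ∧ Disjoint S₁ S₂ ∧
      0 < π S₁ ∧ 0 < π S₂ ∧
      (∀ᵐ x ∂π, x ∈ S₁ → P x S₂ = 1) ∧ (∀ᵐ x ∂π, x ∈ S₂ → P x S₁ = 1) := by
  -- measurable representative
  obtain ⟨g, hgsm, hfg⟩ := hf.aestronglyMeasurable
  have hgm : Measurable g := hgsm.measurable
  have hPmeas : Measurable (⇑P) := P.measurable
  -- invariance
  have hinv : ∀ B : Set X, MeasurableSet B → ∫⁻ x, P x B ∂π = π B := by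
    intro B hB
    have h1 : ∫ x, (P x B).toReal ∂π = (π B).toReal := by
      have := hrev Set.univ B MeasurableSet.univ hB
      simpa [measure_univ, measureReal_def] using this
    have h2 : ∫ x, (P x B).toReal ∂π = (∫⁻ x, P x B ∂π).toReal :=
      integral_toReal (P.measurable_coe hB).aemeasurable
        (Filter.Eventually.of_forall fun x => measure_lt_top _ _)
    have hfin : ∫⁻ x, P x B ∂π ≠ ⊤ := by
      have hle : ∫⁻ x, P x B ∂π ≤ ∫⁻ _, 1 ∂π :=
        lintegral_mono fun x => prob_le_one
      simp only [lintegral_one, measure_univ, mul_one] at hle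
      exact (hle.trans_lt ENNReal.one_lt_top).ne
    exact (ENNReal.toReal_eq_toReal_iff' hfin (measure_ne_top π B)).mp (h2 ▸ h1)
  have hbind : π.bind ⇑P = π := by
    refine Measure.ext fun B hB => ?_
    rw [Measure.bind_apply hB hPmeas.aemeasurable]
    exact hinv B hB
  -- null sets propagate
  have hnull : ∀ N : Set X, MeasurableSet N → π N = 0 → ∀ᵐ x ∂π, P x N = 0 := by
    intro N hN h0
    have : ∫⁻ x, P x N ∂π = 0 := by rw [hinv N hN]; exact h0
    exact (lintegral_eq_zero_iff (P.measurable_coe hN)).mp this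
  -- a.e. x, f = g a.e. under P x
  have hae_fg : ∀ᵐ x ∂π, f =ᵐ[P x] g := by
    have h0 : π {x | f x ≠ g x} = 0 := hfg
    obtain ⟨N, hsub, hNm, hN0⟩ := exists_measurable_superset_of_null h0
    filter_upwards [hnull N hNm hN0] with x hx
    exact measure_mono_null hsub hx
  have hfint : Integrable f π := hf.integrable one_le_two
  have hgint : Integrable g π := hfint.congr hfg
  have hGm : Measurable fun y => (‖g y‖₊ : ENNReal) := hgm.enorm
  have hHm : Measurable fun x => ∫⁻ y, (‖g y‖₊ : ENNReal) ∂(P x) := hGm.lintegral_kernel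
  have hHeq : ∫⁻ x, (∫⁻ y, (‖g y‖₊ : ENNReal) ∂(P x)) ∂π = ∫⁻ x, (‖g x‖₊ : ENNReal) ∂π := by
    rw [← MeasureTheory.Measure.lintegral_bind hPmeas.aemeasurable hGm.aemeasurable, hbind]
  have hGfin : ∫⁻ x, (‖g x‖₊ : ENNReal) ∂π ≠ ⊤ := hgint.2.ne
  have hHae : ∀ᵐ x ∂π, (∫⁻ y, (‖g y‖₊ : ENNReal) ∂(P x)) < ⊤ :=
    ae_lt_top hHm (hHeq ▸ hGfin)
  have hint_ae : ∀ᵐ x ∂π, Integrable g (P x) := by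
    filter_upwards [hHae] with x hx
    exact ⟨hgsm.aestronglyMeasurable, hx⟩
  have heig' : ∀ᵐ x ∂π, ∫ y, g y ∂(P x) = -g x := by
    filter_upwards [heig, hae_fg, hfg] with x hx hxfg hfgx
    rw [← integral_congr_ae hxfg, hx, hfgx]
  -- a.e. equality of |g| with its kernel average of |g|
  have hle : (fun x => (‖g x‖₊ : ENNReal)) ≤ᵐ[π] fun x => ∫⁻ y, (‖g y‖₊ : ENNReal) ∂(P x) := by
    filter_upwards [heig', hint_ae] with x hx hix
    have h1 : |g x| ≤ ∫ y, ‖g y‖ ∂(P x) := by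
      have := norm_integral_le_integral_norm (μ := P x) g
      rw [hx] at this
      simpa using this
    calc (‖g x‖₊ : ENNReal) = ENNReal.ofReal |g x| := by
          exact Real.enorm_eq_ofReal_abs (g x)
      _ ≤ ENNReal.ofReal (∫ y, ‖g y‖ ∂(P x)) := ENNReal.ofReal_le_ofReal h1
      _ = ∫⁻ y, (‖g y‖₊ : ENNReal) ∂(P x) := ofReal_integral_norm_eq_lintegral_enorm hix
  have hkey : (fun x => (‖g x‖₊ : ENNReal)) =ᵐ[π] fun x => ∫⁻ y, (‖g y‖₊ : ENNReal) ∂(P x) :=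
    ae_eq_of_ae_le_of_lintegral_le hle hGfin hHm.aemeasurable hHeq.le
  -- pointwise consequences: integral of |g| under P x equals |g x|
  have habs : ∀ᵐ x ∂π, ∫ y, |g y| ∂(P x) = |g x| := by
    filter_upwards [hkey, hint_ae] with x hx hix
    have h2 : ENNReal.ofReal (∫ y, |g y| ∂(P x)) = ENNReal.ofReal |g x| := by
      have := (ofReal_integral_norm_eq_lintegral_enorm hix :
        ENNReal.ofReal (∫ y, ‖g y‖ ∂(P x)) = ∫⁻ y, (‖g y‖₊ : ENNReal) ∂(P x))
      simp only [Real.norm_eq_abs] at this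
      rw [this]; refine Eq.trans (b := ‖g x‖ₑ) hx.symm ?_
      exact Real.enorm_eq_ofReal_abs (g x)
    have hnn : 0 ≤ ∫ y, |g y| ∂(P x) := integral_nonneg fun y => abs_nonneg _
    exact (ENNReal.ofReal_eq_ofReal_iff hnn (abs_nonneg _)).mp h2
  -- regimes
  have hregime : ∀ᵐ x ∂π, (0 < g x → P x {y | 0 < g y} = 0) ∧
      (g x < 0 → P x {y | g y < 0} = 0) ∧ (g x = 0 → P x {y | g y ≠ 0} = 0) := by
    filter_upwards [heig', hint_ae, habs] with x hx hix habsx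
    refine ⟨fun hgx => ?_, fun hgx => ?_, fun hgx => ?_⟩
    · have hint : Integrable (fun y => |g y| + g y) (P x) := hix.abs.add hix
      have hz : ∫ y, (|g y| + g y) ∂(P x) = 0 := by
        rw [integral_add hix.abs hix, habsx, hx, abs_of_pos hgx]
        ring
      have hφ : (fun y => |g y| + g y) =ᵐ[P x] 0 :=
        (integral_eq_zero_iff_of_nonneg_ae
          (Filter.Eventually.of_forall fun y => by
            simp only [Pi.zero_apply]
            have := abs_nonneg (g y)
            have := neg_abs_le (g y)
            linarith) hint).mp hz
      have h0 : P x {y | |g y| + g y ≠ 0} = 0 := hφ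
      refine measure_mono_null (fun y hy => ?_) h0
      simp only [Set.mem_setOf_eq] at hy ⊢
      have : 0 < |g y| + g y := by
        have : 0 < g y := hy
        positivity
      exact this.ne'
    · have hint : Integrable (fun y => |g y| - g y) (P x) := hix.abs.sub hix
      have hz : ∫ y, (|g y| - g y) ∂(P x) = 0 := by
        rw [integral_sub hix.abs hix, habsx, hx, abs_of_neg hgx]
        ring
      have hφ : (fun y => |g y| - g y) =ᵐ[P x] 0 :=
        (integral_eq_zero_iff_of_nonneg_ae
          (Filter.Eventually.of_forall fun y => by
            simp only [Pi.zero_apply, sub_nonneg]; exact le_abs_self _) hint).mp hz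
      have h0 : P x {y | |g y| - g y ≠ 0} = 0 := hφ
      refine measure_mono_null (fun y hy => ?_) h0
      simp only [Set.mem_setOf_eq] at hy ⊢
      have hlt : g y < |g y| := by rw [abs_of_neg hy]; linarith
      exact sub_ne_zero_of_ne hlt.ne'
    · have hz : ∫ y, |g y| ∂(P x) = 0 := by rw [habsx, hgx, abs_zero]
      have hφ : (fun y => |g y|) =ᵐ[P x] 0 :=
        (integral_eq_zero_iff_of_nonneg_ae
          (Filter.Eventually.of_forall fun y => abs_nonneg _) hix.abs).mp hz
      have h0 : P x {y | |g y| ≠ 0} = 0 := hφ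
      refine measure_mono_null (fun y hy => ?_) h0
      simp only [Set.mem_setOf_eq] at hy ⊢
      simpa using hy
  -- the sets
  set S₁ : Set X := {x | 0 < g x} with hS₁def
  set S₂ : Set X := {x | g x < 0} with hS₂def
  set N0 : Set X := {x | g x = 0} with hN0def
  have hS₁m : MeasurableSet S₁ := measurableSet_lt measurable_const hgm
  have hS₂m : MeasurableSet S₂ := measurableSet_lt hgm measurable_const
  have hN0m : MeasurableSet N0 := hgm (measurableSet_singleton 0)
  have hg0 : ∫ x, g x ∂π = 0 := by rw [← integral_congr_ae hfg]; exact hf0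
  have hgne : ¬ g =ᵐ[π] (fun _ => (0:ℝ)) := fun h => hfne (hfg.trans h)
  -- positivity
  have hpos₁ : 0 < π S₁ := by
    rcases eq_or_lt_of_le (zero_le : 0 ≤ π S₁) with h0 | h
    · exfalso
      have hle0 : ∀ᵐ x ∂π, g x ≤ 0 := by
        rw [ae_iff]
        convert h0.symm using 2
        ext x; simp [hS₁def]
      have hz : (fun x => -g x) =ᵐ[π] (fun _ => (0:ℝ)) := by
        refine (integral_eq_zero_iff_of_nonneg_ae ?_ hgint.neg).mp ?_
        · filter_upwards [hle0] with x hx; simpa using hx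
        · simp only [Pi.neg_apply]
          rw [integral_neg, hg0, neg_zero]
      apply hgne
      filter_upwards [hz] with x hx
      simpa using hx
    · exact h
  have hpos₂ : 0 < π S₂ := by
    rcases eq_or_lt_of_le (zero_le : 0 ≤ π S₂) with h0 | h
    · exfalso
      have hle0 : ∀ᵐ x ∂π, 0 ≤ g x := by
        rw [ae_iff]
        convert h0.symm using 2
        ext x; simp [hS₂def]
      have hz : g =ᵐ[π] (fun _ => (0:ℝ)) :=
        (integral_eq_zero_iff_of_nonneg_ae hle0 hgint).mp hg0
      exact hgne hz
    · exact h
  -- a.e. x in N0, kernel gives no mass to S₁ or S₂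
  have hN0toS : ∀ᵐ x ∂π, x ∈ N0 → P x S₁ = 0 ∧ P x S₂ = 0 := by
    filter_upwards [hregime] with x hx hxN
    have h0 : P x {y | g y ≠ 0} = 0 := hx.2.2 hxN
    constructor
    · exact measure_mono_null (fun y hy => ne_of_gt hy) h0
    · exact measure_mono_null (fun y hy => ne_of_lt hy) h0
  -- from reversibility: a.e. x in A, P x N0 = 0, for A ∈ {S₁, S₂}
  have hkey2 : ∀ A : Set X, MeasurableSet A → (∀ᵐ x ∂π, x ∈ N0 → P x A = 0) →
      ∀ᵐ x ∂π, x ∈ A → P x N0 = 0 := by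
    intro A hA hAnull
    have hRHS : ∫ x in N0, (P x A).toReal ∂π = 0 := by
      apply integral_eq_zero_of_ae
      rw [Filter.EventuallyEq, ae_restrict_iff' hN0m]
      filter_upwards [hAnull] with x hx hxN
      simp [hx hxN]
    have hLHS : ∫ x in A, (P x N0).toReal ∂π = 0 := by rw [hrev A N0 hA hN0m, hRHS]
    have hmeas : Measurable fun x => (P x N0).toReal := (P.measurable_coe hN0m).ennreal_toReal
    have hint : Integrable (fun x => (P x N0).toReal) (π.restrict A) :=
      ⟨hmeas.aestronglyMeasurable, HasFiniteIntegral.of_bounded (C := 1)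
        (Filter.Eventually.of_forall fun x => by
          rw [Real.norm_eq_abs, abs_of_nonneg ENNReal.toReal_nonneg]
          exact ENNReal.toReal_le_of_le_ofReal zero_le_one (by simpa using prob_le_one))⟩
    have hz := (integral_eq_zero_iff_of_nonneg_ae
      (Filter.Eventually.of_forall fun x => ENNReal.toReal_nonneg) hint).mp hLHS
    rw [Filter.EventuallyEq, ae_restrict_iff' hA] at hz
    filter_upwards [hz] with x hx hxA
    have h0 := hx hxA
    simp only [Pi.zero_apply] at h0
    exact (ENNReal.toReal_eq_zero_iff _).mp h0 |>.resolve_right (measure_ne_top _ _)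
  have hN01 : ∀ᵐ x ∂π, x ∈ S₁ → P x N0 = 0 := by
    apply hkey2 S₁ hS₁m
    filter_upwards [hN0toS] with x hx hxN
    exact (hx hxN).1
  have hN02 : ∀ᵐ x ∂π, x ∈ S₂ → P x N0 = 0 := by
    apply hkey2 S₂ hS₂m
    filter_upwards [hN0toS] with x hx hxN
    exact (hx hxN).2
  refine ⟨S₁, S₂, hS₁m, hS₂m, ?_, hpos₁, hpos₂, ?_, ?_⟩
  · exact Set.disjoint_left.mpr fun x (hx1 : 0 < g x) (hx2 : g x < 0) =>
      absurd hx1 (not_lt.mpr hx2.le)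
  · filter_upwards [hregime, hN01] with x hreg hN0x hxS₁
    have hcompl : S₂ᶜ = S₁ ∪ N0 := by
      ext y
      simp only [hS₁def, hS₂def, hN0def, Set.mem_compl_iff, Set.mem_setOf_eq, not_lt,
        Set.mem_union]
      constructor
      · intro hy; rcases hy.lt_or_eq with h | h
        · exact Or.inl h
        · exact Or.inr h.symm
      · rintro (h | h)
        · exact h.le
        · exact h.ge
    have h0 : P x S₂ᶜ = 0 := by
      rw [hcompl]
      refine le_antisymm ?_ zero_le
      calc P x (S₁ ∪ N0) ≤ P x S₁ + P x N0 := measure_union_le _ _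
        _ = 0 := by rw [hreg.1 hxS₁, hN0x hxS₁, add_zero]
    exact (prob_compl_eq_zero_iff hS₂m).mp h0
  · filter_upwards [hregime, hN02] with x hreg hN0x hxS₂
    have hcompl : S₁ᶜ = S₂ ∪ N0 := by
      ext y
      simp only [hS₁def, hS₂def, hN0def, Set.mem_compl_iff, Set.mem_setOf_eq, not_lt,
        Set.mem_union]
      constructor
      · intro hy; rcases hy.lt_or_eq with h | h
        · exact Or.inl h
        · exact Or.inr h
      · rintro (h | h)
        · exact h.le
        · exact h.le
    have h0 : P x S₁ᶜ = 0 := by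
      rw [hcompl]
      refine le_antisymm ?_ zero_le
      calc P x (S₂ ∪ N0) ≤ P x S₂ + P x N0 := measure_union_le _ _
        _ = 0 := by rw [hreg.2.1 hxS₂, hN0x hxS₂, add_zero]
    exact (prob_compl_eq_zero_iff hS₁m).mp h0
end

section
/- Let P and Q be Markov kernels on (X, F), both reversible with respect to the probability measure π, such that P Peskun-dominates Q: for π-a.e. x ∈ X and every measurable A, P(x, A \ {x}) ≥ Q(x, A \ {x}). Then the operator Q̂ − P̂ is positive on L²₀(π): ⟨f, (Q̂ − P̂) f⟩ ≥ 0 for every f ∈ L²₀(π). Moreover, ⟨f, (Q̂ − P̂) f⟩ = (1/2)∬ (f(x) − f(y))² (δ_x(dy) + P(x, dy) − Q(x, dy)) π(dx). -/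
open MeasureTheory ProbabilityTheory
open scoped ENNReal NNReal

namespace Stmt17Aux

variable {X : Type*} [MeasurableSpace X]

lemma integrable_mul_of_memL2 {π : Measure X} {f g : X → ℝ}
    (hf : MemLp f 2 π) (hg : MemLp g 2 π) :
    Integrable (fun x => f x * g x) π := by
  have h1 := hf.integrable_sq
  have h2 := hg.integrable_sq
  refine Integrable.mono' (h1.add h2) (hf.aestronglyMeasurable.mul hg.aestronglyMeasurable) ?_
  filter_upwards with x
  simp only [Pi.add_apply]
  rw [Real.norm_eq_abs]
  nlinarith [sq_nonneg (|f x| - |g x|), sq_abs (f x), sq_abs (g x), abs_mul (f x) (g x),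
    abs_nonneg (f x * g x)]

lemma bind_eq_self {π : Measure X} [IsProbabilityMeasure π] (P : Kernel X X) [IsMarkovKernel P]
    (hrev : ∀ A B : Set X, MeasurableSet A → MeasurableSet B →
      ∫ x in A, (P x B).toReal ∂π = ∫ x in B, (P x A).toReal ∂π) :
    π.bind P = π := by
  ext B hB
  rw [Measure.bind_apply hB P.measurable.aemeasurable]
  have h := hrev Set.univ B MeasurableSet.univ hB
  rw [Measure.restrict_univ] at h
  have h2 : ∀ x, (P x Set.univ).toReal = 1 := fun x => by simp
  simp only [h2] at h
  rw [setIntegral_const] at h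
  have Ib : Integrable (fun x => (P x B).toReal) π := by
    refine Integrable.mono' (integrable_const (1 : ℝ))
      ((P.measurable_coe hB).ennreal_toReal.aestronglyMeasurable) ?_
    filter_upwards with x
    rw [Real.norm_eq_abs, abs_of_nonneg ENNReal.toReal_nonneg]
    exact ENNReal.toReal_le_of_le_ofReal one_pos.le (by simpa using prob_le_one)
  have nn : 0 ≤ᵐ[π] fun x => (P x B).toReal :=
    Filter.Eventually.of_forall fun x => ENNReal.toReal_nonneg
  calc ∫⁻ x, P x B ∂π = ∫⁻ x, ENNReal.ofReal ((P x B).toReal) ∂π := by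
        refine lintegral_congr fun x => ?_
        rw [ENNReal.ofReal_toReal (measure_ne_top _ _)]
    _ = ENNReal.ofReal (∫ x, (P x B).toReal ∂π) :=
        (ofReal_integral_eq_lintegral_ofReal Ib nn).symm
    _ = π B := by rw [h]; simp [ENNReal.ofReal_toReal (measure_ne_top π B)]

lemma null_kernel {π : Measure X} (P : Kernel X X) [IsMarkovKernel P]
    (hb : π.bind P = π) {N : Set X} (hN : MeasurableSet N) (h0 : π N = 0) :
    ∀ᵐ x ∂π, P x N = 0 := by
  have h : ∫⁻ x, P x N ∂π = 0 := by
    rw [← Measure.bind_apply hN P.measurable.aemeasurable, hb, h0]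
  have := (lintegral_eq_zero_iff (P.measurable_coe hN)).1 h
  filter_upwards [this] with x hx using hx

lemma lintegral_kernel_invariant {π : Measure X} (P : Kernel X X) [IsMarkovKernel P]
    (hb : π.bind P = π) {g : X → ℝ≥0∞} (hg : Measurable g) :
    ∫⁻ x, ∫⁻ y, g y ∂(P x) ∂π = ∫⁻ y, g y ∂π := by
  conv_rhs => rw [← hb]
  exact (Measure.lintegral_bind P.measurable.aemeasurable hg.aemeasurable).symm

lemma lintegral_le_of_peskun {P Q : Kernel X X} {x : X}
    (hx : ∀ A : Set X, MeasurableSet A → Q x (A \ {x}) ≤ P x (A \ {x}))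
    {g : X → ℝ≥0∞} (hg : Measurable g) (hgx : g x = 0) :
    ∫⁻ y, g y ∂(Q x) ≤ ∫⁻ y, g y ∂(P x) := by
  have key : ∀ A : Set X, MeasurableSet A → x ∉ A → Q x A ≤ P x A := by
    intro A hA hxA
    have := hx A hA
    rwa [Set.diff_singleton_eq_self hxA] at this
  rw [lintegral_eq_iSup_eapprox_lintegral hg, lintegral_eq_iSup_eapprox_lintegral hg]
  refine iSup_mono fun n => ?_
  set φ := SimpleFunc.eapprox g n with hφ
  have hφx : φ x = 0 := by
    have h1 : (φ : X → ℝ≥0∞) x ≤ g x := by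
      rw [hφ]
      exact (le_iSup (fun n => (SimpleFunc.eapprox g n : X → ℝ≥0∞) x) n).trans_eq
        (SimpleFunc.iSup_eapprox_apply hg x)
    simpa [hgx] using h1
  have hdef : ∀ (μ : Measure X), φ.lintegral μ = ∑ c ∈ φ.range, c * μ (⇑φ ⁻¹' {c}) :=
    fun μ => rfl
  rw [hdef, hdef]
  refine Finset.sum_le_sum fun c _ => ?_
  rcases eq_or_ne c 0 with rfl | hc
  · simp
  · refine mul_le_mul_right (key _ (φ.measurableSet_fiber c) ?_) c
    intro hmem
    exact hc ((Set.mem_preimage.1 hmem).symm.trans hφx)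


lemma kernel_facts {π : Measure X} [IsProbabilityMeasure π] (P : Kernel X X) [IsMarkovKernel P]
    (hb : π.bind P = π) {f : X → ℝ} (hfm : StronglyMeasurable f) (hf2 : MemLp f 2 π) :
    Integrable (fun x => f x * ∫ y, f y ∂(P x)) π ∧
    Integrable (fun x => ∫ y, (f x - f y) ^ 2 ∂(P x)) π ∧
    ∫ x, (∫ y, (f x - f y) ^ 2 ∂(P x)) ∂π
      = 2 * ∫ x, f x ^ 2 ∂π - 2 * ∫ x, f x * ∫ y, f y ∂(P x) ∂π ∧
    (∀ᵐ x ∂π, (∫⁻ y, ENNReal.ofReal ((f x - f y) ^ 2) ∂(P x)) ≠ ⊤) ∧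
    (∀ x, ∫ y, (f x - f y) ^ 2 ∂(P x)
      = (∫⁻ y, ENNReal.ofReal ((f x - f y) ^ 2) ∂(P x)).toReal) := by
  have hfmeas : Measurable f := hfm.measurable
  set g2 : X → ℝ≥0∞ := fun y => ENNReal.ofReal (f y ^ 2) with hg2def
  have hg2 : Measurable g2 := (hfmeas.pow_const 2).ennreal_ofReal
  set G : X → ℝ≥0∞ := fun x => ∫⁻ y, g2 y ∂(P x) with hGdef
  have hG : Measurable G := by
    have : Measurable (Function.uncurry fun (_ : X) y => g2 y) :=
      hg2.comp measurable_snd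
    exact this.lintegral_kernel_prod_right
  have hMG : ∫⁻ x, G x ∂π = ∫⁻ y, g2 y ∂π := lintegral_kernel_invariant P hb hg2
  have hMfin : ∫⁻ y, g2 y ∂π ≠ ⊤ := by
    have h := hf2.integrable_sq.hasFiniteIntegral
    rw [hasFiniteIntegral_def] at h
    have : ∫⁻ y, g2 y ∂π = ∫⁻ y, (‖f y ^ 2‖ₑ : ℝ≥0∞) ∂π := by
      refine lintegral_congr fun y => ?_
      exact (Real.enorm_eq_ofReal (sq_nonneg (f y))).symm
    rw [this]
    exact h.ne
  have hGfin : ∫⁻ x, G x ∂π ≠ ⊤ := by rw [hMG]; exact hMfin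
  have hGae : ∀ᵐ x ∂π, G x ≠ ⊤ := by
    filter_upwards [ae_lt_top hG hGfin] with x hx using hx.ne
  -- the kernel integral of f ^ 2
  have hPf2eq : ∀ x, ∫ y, f y ^ 2 ∂(P x) = (G x).toReal := by
    intro x
    rw [integral_eq_lintegral_of_nonneg_ae (Filter.Eventually.of_forall fun y => sq_nonneg (f y))
      ((hfmeas.pow_const 2).aestronglyMeasurable)]
  have IPf2 : Integrable (fun x => (G x).toReal) π :=
    integrable_toReal_of_lintegral_ne_top hG.aemeasurable hGfin
  have hintPf2 : ∫ x, (G x).toReal ∂π = ∫ x, f x ^ 2 ∂π := by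
    rw [integral_toReal hG.aemeasurable (ae_lt_top hG hGfin), hMG,
      integral_eq_lintegral_of_nonneg_ae (Filter.Eventually.of_forall fun y => sq_nonneg (f y))
      ((hfmeas.pow_const 2).aestronglyMeasurable)]
  -- the kernel average of f
  set Pf : X → ℝ := fun x => ∫ y, f y ∂(P x) with hPfdef
  have hPfm : StronglyMeasurable Pf :=
    StronglyMeasurable.integral_kernel_prod_right' (hfm.comp_measurable measurable_snd)
  have hPfbound : ∀ x, ENNReal.ofReal (Pf x ^ 2) ≤ G x := by
    intro x
    by_cases hI : Integrable f (P x)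
    · have h1 : ENNReal.ofReal (Pf x ^ 2) = (ENNReal.ofReal |Pf x|) ^ 2 := by
        rw [← ENNReal.ofReal_pow (abs_nonneg _), sq_abs]
      have h2 : ENNReal.ofReal |Pf x| ≤ ∫⁻ y, ENNReal.ofReal |f y| ∂(P x) := by
        calc ENNReal.ofReal |Pf x| ≤ ENNReal.ofReal (∫ y, |f y| ∂(P x)) := by
              apply ENNReal.ofReal_le_ofReal
              have h5 := norm_integral_le_integral_norm (μ := P x) f
              simpa [Real.norm_eq_abs] using h5
          _ = ∫⁻ y, ENNReal.ofReal |f y| ∂(P x) :=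
              ofReal_integral_eq_lintegral_ofReal hI.abs
                (Filter.Eventually.of_forall fun y => abs_nonneg _)
      have h3 : (∫⁻ y, ENNReal.ofReal |f y| ∂(P x)) ^ 2 ≤ G x := by
        have hconj : (2 : ℝ).HolderConjugate 2 := Real.holderConjugate_iff.mpr ⟨one_lt_two, by norm_num⟩
        have := ENNReal.lintegral_mul_le_Lp_mul_Lq (P x) hconj
          ((hfmeas.abs.ennreal_ofReal).aemeasurable) (aemeasurable_const (b := (1 : ℝ≥0∞)))
        simp only [Pi.mul_apply, mul_one, ENNReal.one_rpow, lintegral_const, measure_univ,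
          one_mul] at this
        have h4 : ∫⁻ y, ENNReal.ofReal |f y| ^ (2 : ℝ) ∂(P x) = G x := by
          refine lintegral_congr fun y => ?_
          rw [show ((2 : ℝ)) = ((2 : ℕ) : ℝ) by norm_num, ENNReal.rpow_natCast,
            ← ENNReal.ofReal_pow (abs_nonneg _), sq_abs]
        rw [h4] at this
        calc (∫⁻ y, ENNReal.ofReal |f y| ∂(P x)) ^ 2 ≤ (G x ^ (1 / (2:ℝ))) ^ 2 := by
              gcongr
          _ = G x := by
              rw [← ENNReal.rpow_natCast (G x ^ (1 / (2:ℝ))) 2, ← ENNReal.rpow_mul]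
              norm_num
      calc ENNReal.ofReal (Pf x ^ 2) = (ENNReal.ofReal |Pf x|) ^ 2 := h1
        _ ≤ (∫⁻ y, ENNReal.ofReal |f y| ∂(P x)) ^ 2 := by gcongr
        _ ≤ G x := h3
    · have h0 : Pf x = 0 := integral_undef hI
      simp [h0]
  have hPfL2 : MemLp Pf 2 π := by
    refine (memLp_two_iff_integrable_sq hPfm.aestronglyMeasurable).2 ?_
    refine ⟨((hPfm.measurable.pow_const 2).aestronglyMeasurable), ?_⟩
    rw [hasFiniteIntegral_def]
    calc ∫⁻ x, (‖Pf x ^ 2‖ₑ : ℝ≥0∞) ∂π = ∫⁻ x, ENNReal.ofReal (Pf x ^ 2) ∂π := by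
          refine lintegral_congr fun x => ?_
          exact Real.enorm_eq_ofReal (sq_nonneg (Pf x))
      _ ≤ ∫⁻ x, G x ∂π := lintegral_mono hPfbound
      _ < ⊤ := hGfin.lt_top
  have hIfPf : Integrable (fun x => f x * Pf x) π := integrable_mul_of_memL2 hf2 hPfL2
  -- a.e. integrability with respect to the kernels
  have hIf : ∀ᵐ x ∂π, Integrable f (P x) ∧ Integrable (fun y => f y ^ 2) (P x) := by
    filter_upwards [hGae] with x hx
    have hint2 : Integrable (fun y => f y ^ 2) (P x) := by
      refine ⟨(hfmeas.pow_const 2).aestronglyMeasurable, ?_⟩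
      rw [hasFiniteIntegral_def]
      have : ∫⁻ y, (‖f y ^ 2‖ₑ : ℝ≥0∞) ∂(P x) = G x := by
        refine lintegral_congr fun y => ?_
        exact Real.enorm_eq_ofReal (sq_nonneg (f y))
      rw [this]
      exact hx.lt_top
    refine ⟨?_, hint2⟩
    exact ((memLp_two_iff_integrable_sq hfm.aestronglyMeasurable).2 hint2).integrable one_le_two
  -- decomposition of the energy integrand
  have hEpdecomp : ∀ᵐ x ∂π, ∫ y, (f x - f y) ^ 2 ∂(P x)
      = f x ^ 2 - 2 * (f x * Pf x) + (G x).toReal := by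
    filter_upwards [hIf] with x hx
    obtain ⟨hI1, hI2⟩ := hx
    have e : (fun y => (f x - f y) ^ 2)
        = fun y => (f x ^ 2 - 2 * f x * f y) + f y ^ 2 := by
      funext y; ring
    have hI3 : Integrable (fun y => f x ^ 2 - 2 * f x * f y) (P x) :=
      (integrable_const _).sub (hI1.const_mul _)
    rw [e, integral_add hI3 hI2,
      integral_sub (integrable_const _) (hI1.const_mul _), integral_const,
      integral_const_mul, hPf2eq x]
    simp [measure_univ, mul_assoc, hPfdef]
  have Iaux : Integrable (fun x => f x ^ 2 - 2 * (f x * Pf x) + (G x).toReal) π :=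
    (hf2.integrable_sq.sub (hIfPf.const_mul 2)).add IPf2
  have IEp : Integrable (fun x => ∫ y, (f x - f y) ^ 2 ∂(P x)) π :=
    Iaux.congr (hEpdecomp.mono fun x hx => hx.symm)
  have hintEp : ∫ x, (∫ y, (f x - f y) ^ 2 ∂(P x)) ∂π
      = 2 * ∫ x, f x ^ 2 ∂π - 2 * ∫ x, f x * Pf x ∂π := by
    have hI4 : Integrable (fun x => f x ^ 2 - 2 * (f x * Pf x)) π :=
      hf2.integrable_sq.sub (hIfPf.const_mul 2)
    have hI5 : Integrable (fun x => 2 * (f x * Pf x)) π := hIfPf.const_mul 2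
    rw [integral_congr_ae hEpdecomp, integral_add hI4 IPf2,
      integral_sub hf2.integrable_sq hI5, integral_const_mul, hintPf2]
    ring
  -- finiteness of the lintegral version
  have hLfin : ∀ᵐ x ∂π, (∫⁻ y, ENNReal.ofReal ((f x - f y) ^ 2) ∂(P x)) ≠ ⊤ := by
    filter_upwards [hGae] with x hx
    have hbnd : ∫⁻ y, ENNReal.ofReal ((f x - f y) ^ 2) ∂(P x)
        ≤ 2 * ENNReal.ofReal (f x ^ 2) + 2 * G x := by
      have hpt : ∀ y, ENNReal.ofReal ((f x - f y) ^ 2)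
          ≤ 2 * ENNReal.ofReal (f x ^ 2) + 2 * g2 y := by
        intro y
        have hr : (f x - f y) ^ 2 ≤ 2 * f x ^ 2 + 2 * f y ^ 2 := by nlinarith [sq_nonneg (f x + f y)]
        calc ENNReal.ofReal ((f x - f y) ^ 2)
            ≤ ENNReal.ofReal (2 * f x ^ 2 + 2 * f y ^ 2) := ENNReal.ofReal_le_ofReal hr
          _ = 2 * ENNReal.ofReal (f x ^ 2) + 2 * g2 y := by
              rw [ENNReal.ofReal_add (by positivity) (by positivity),
                ENNReal.ofReal_mul (by norm_num), ENNReal.ofReal_mul (by norm_num)]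
              norm_num [hg2def]
      calc ∫⁻ y, ENNReal.ofReal ((f x - f y) ^ 2) ∂(P x)
          ≤ ∫⁻ y, (2 * ENNReal.ofReal (f x ^ 2) + 2 * g2 y) ∂(P x) := lintegral_mono hpt
        _ = 2 * ENNReal.ofReal (f x ^ 2) + 2 * G x := by
            rw [lintegral_add_left (measurable_const), lintegral_const,
              lintegral_const_mul _ hg2]
            simp [measure_univ]
            rfl
    refine ne_top_of_le_ne_top ?_ hbnd
    exact ENNReal.add_ne_top.2 ⟨ENNReal.mul_ne_top (by norm_num) ENNReal.ofReal_ne_top,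
      ENNReal.mul_ne_top (by norm_num) hx⟩
  have hEpLp : ∀ x, ∫ y, (f x - f y) ^ 2 ∂(P x)
      = (∫⁻ y, ENNReal.ofReal ((f x - f y) ^ 2) ∂(P x)).toReal := by
    intro x
    rw [integral_eq_lintegral_of_nonneg_ae (f := fun y => (f x - f y) ^ 2) (Filter.Eventually.of_forall fun y => sq_nonneg _)
      (((measurable_const.sub hfmeas).pow_const 2).aestronglyMeasurable)]
  exact ⟨hIfPf, IEp, hintEp, hLfin, hEpLp⟩


lemma core {π : Measure X} [IsProbabilityMeasure π] (P Q : Kernel X X)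
    [IsMarkovKernel P] [IsMarkovKernel Q]
    (hbP : π.bind P = π) (hbQ : π.bind Q = π)
    (hpesk : ∀ᵐ x ∂π, ∀ A : Set X, MeasurableSet A → Q x (A \ {x}) ≤ P x (A \ {x}))
    {f : X → ℝ} (hfm : StronglyMeasurable f) (hf2 : MemLp f 2 π) :
    (0 ≤ ∫ x, f x * ((∫ y, f y ∂(Q x)) - ∫ y, f y ∂(P x)) ∂π) ∧
    (∫ x, f x * ((∫ y, f y ∂(Q x)) - ∫ y, f y ∂(P x)) ∂π =
      (1 / 2) * ∫ x, ((∫ y, (f x - f y) ^ 2 ∂(Measure.dirac x))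
        + (∫ y, (f x - f y) ^ 2 ∂(P x)) - ∫ y, (f x - f y) ^ 2 ∂(Q x)) ∂π) := by
  obtain ⟨hIfPf, IEp, hintEp, hLPfin, hEpLP⟩ := kernel_facts P hbP hfm hf2
  obtain ⟨hIfQf, IEq, hintEq, hLQfin, hEqLQ⟩ := kernel_facts Q hbQ hfm hf2
  have hfmeas := hfm.measurable
  have hdir : ∀ x : X, ∫ y, (f x - f y) ^ 2 ∂(Measure.dirac x) = 0 := by
    intro x
    rw [integral_dirac' (fun y => (f x - f y) ^ 2) x (((measurable_const.sub hfmeas).pow_const 2).stronglyMeasurable)]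
    simp
  have hsplit : ∫ x, f x * ((∫ y, f y ∂(Q x)) - ∫ y, f y ∂(P x)) ∂π
      = ∫ x, f x * ∫ y, f y ∂(Q x) ∂π - ∫ x, f x * ∫ y, f y ∂(P x) ∂π := by
    have he : (fun x => f x * ((∫ y, f y ∂(Q x)) - ∫ y, f y ∂(P x)))
        = fun x => f x * ∫ y, f y ∂(Q x) - f x * ∫ y, f y ∂(P x) := by
      funext x; ring
    rw [he, integral_sub hIfQf hIfPf]
  have hRHSint : ∫ x, ((∫ y, (f x - f y) ^ 2 ∂(Measure.dirac x))
        + (∫ y, (f x - f y) ^ 2 ∂(P x)) - ∫ y, (f x - f y) ^ 2 ∂(Q x)) ∂π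
      = ∫ x, (∫ y, (f x - f y) ^ 2 ∂(P x)) ∂π
        - ∫ x, (∫ y, (f x - f y) ^ 2 ∂(Q x)) ∂π := by
    have he : (fun x => (∫ y, (f x - f y) ^ 2 ∂(Measure.dirac x))
        + (∫ y, (f x - f y) ^ 2 ∂(P x)) - ∫ y, (f x - f y) ^ 2 ∂(Q x))
        = fun x => (∫ y, (f x - f y) ^ 2 ∂(P x)) - ∫ y, (f x - f y) ^ 2 ∂(Q x) := by
      funext x; rw [hdir x]; ring
    rw [he, integral_sub IEp IEq]
  have h2 : ∫ x, f x * ((∫ y, f y ∂(Q x)) - ∫ y, f y ∂(P x)) ∂π =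
      (1 / 2) * ∫ x, ((∫ y, (f x - f y) ^ 2 ∂(Measure.dirac x))
        + (∫ y, (f x - f y) ^ 2 ∂(P x)) - ∫ y, (f x - f y) ^ 2 ∂(Q x)) ∂π := by
    rw [hsplit, hRHSint, hintEp, hintEq]; ring
  refine ⟨?_, h2⟩
  rw [h2]
  have hnn : 0 ≤ ∫ x, ((∫ y, (f x - f y) ^ 2 ∂(Measure.dirac x))
        + (∫ y, (f x - f y) ^ 2 ∂(P x)) - ∫ y, (f x - f y) ^ 2 ∂(Q x)) ∂π := by
    refine integral_nonneg_of_ae ?_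
    filter_upwards [hpesk, hLPfin] with x hpx hLx
    have hle : ∫⁻ y, ENNReal.ofReal ((f x - f y) ^ 2) ∂(Q x)
        ≤ ∫⁻ y, ENNReal.ofReal ((f x - f y) ^ 2) ∂(P x) := by
      refine lintegral_le_of_peskun hpx
        (((measurable_const.sub hfmeas).pow_const 2).ennreal_ofReal) ?_
      simp
    have hEE : ∫ y, (f x - f y) ^ 2 ∂(Q x) ≤ ∫ y, (f x - f y) ^ 2 ∂(P x) := by
      rw [hEpLP x, hEqLQ x]
      exact ENNReal.toReal_mono hLx hle
    simp only [Pi.zero_apply]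
    rw [hdir x]
    linarith
  exact mul_nonneg (by norm_num) hnn

end Stmt17Aux

/-- If `P` and `Q` are Markov kernels reversible with respect to `π` and `P`
Peskun-dominates `Q`, then `Q̂ − P̂` is positive on `L²₀(π)`; moreover
`⟨f, (Q̂ − P̂) f⟩ = (1/2)∬ (f(x) − f(y))² (δ_x(dy) + P(x,dy) − Q(x,dy)) π(dx)`. -/
theorem stmt17 {X : Type*} [MeasurableSpace X] (π : Measure X) [IsProbabilityMeasure π]
    (P Q : Kernel X X) [IsMarkovKernel P] [IsMarkovKernel Q]
    (hrevP : ∀ A B : Set X, MeasurableSet A → MeasurableSet B →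
      ∫ x in A, (P x B).toReal ∂π = ∫ x in B, (P x A).toReal ∂π)
    (hrevQ : ∀ A B : Set X, MeasurableSet A → MeasurableSet B →
      ∫ x in A, (Q x B).toReal ∂π = ∫ x in B, (Q x A).toReal ∂π)
    (hpesk : ∀ᵐ x ∂π, ∀ A : Set X, MeasurableSet A → Q x (A \ {x}) ≤ P x (A \ {x})) :
    ∀ f : X → ℝ, MemLp f 2 π → ∫ x, f x ∂π = 0 →
      (0 ≤ ∫ x, f x * ((∫ y, f y ∂(Q x)) - ∫ y, f y ∂(P x)) ∂π) ∧
      (∫ x, f x * ((∫ y, f y ∂(Q x)) - ∫ y, f y ∂(P x)) ∂π =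
        (1 / 2) * ∫ x, ((∫ y, (f x - f y) ^ 2 ∂(Measure.dirac x))
          + (∫ y, (f x - f y) ^ 2 ∂(P x)) - ∫ y, (f x - f y) ^ 2 ∂(Q x)) ∂π) := by
  have hbP := Stmt17Aux.bind_eq_self P hrevP
  have hbQ := Stmt17Aux.bind_eq_self Q hrevQ
  intro f hf _hf0
  set f' : X → ℝ := hf.1.mk f with hf'def
  have hf'm : StronglyMeasurable f' := hf.1.stronglyMeasurable_mk
  have hae : f =ᵐ[π] f' := hf.1.ae_eq_mk
  have hf'2 : MemLp f' 2 π := hf.ae_eq hae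
  obtain ⟨N, hsub, hNm, hN0⟩ := exists_measurable_superset_of_null (ae_iff.1 hae)
  have hPN := Stmt17Aux.null_kernel P hbP hNm hN0
  have hQN := Stmt17Aux.null_kernel Q hbQ hNm hN0
  have hxN : ∀ᵐ x ∂π, x ∉ N := (measure_eq_zero_iff_ae_notMem (μ := π)).1 hN0
  have key : ∀ᵐ x ∂π,
      (f x * ((∫ y, f y ∂(Q x)) - ∫ y, f y ∂(P x))
        = f' x * ((∫ y, f' y ∂(Q x)) - ∫ y, f' y ∂(P x))) ∧
      ((∫ y, (f x - f y) ^ 2 ∂(Measure.dirac x))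
          + (∫ y, (f x - f y) ^ 2 ∂(P x)) - ∫ y, (f x - f y) ^ 2 ∂(Q x)
        = (∫ y, (f' x - f' y) ^ 2 ∂(Measure.dirac x))
          + (∫ y, (f' x - f' y) ^ 2 ∂(P x)) - ∫ y, (f' x - f' y) ^ 2 ∂(Q x)) := by
    filter_upwards [hxN, hPN, hQN] with x hx hPx hQx
    have hfx : f x = f' x := by
      by_contra h
      exact hx (hsub h)
    have haeP : f =ᵐ[P x] f' := ae_iff.2 (measure_mono_null hsub hPx)
    have haeQ : f =ᵐ[Q x] f' := ae_iff.2 (measure_mono_null hsub hQx)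
    have hdx : Measure.dirac x N = 0 := by
      rw [Measure.dirac_apply' x hNm]
      simp [hx]
    have haeD : f =ᵐ[Measure.dirac x] f' := ae_iff.2 (measure_mono_null hsub hdx)
    have eP : ∫ y, f y ∂(P x) = ∫ y, f' y ∂(P x) := integral_congr_ae haeP
    have eQ : ∫ y, f y ∂(Q x) = ∫ y, f' y ∂(Q x) := integral_congr_ae haeQ
    have eP2 : ∫ y, (f x - f y) ^ 2 ∂(P x) = ∫ y, (f' x - f' y) ^ 2 ∂(P x) := by
      refine integral_congr_ae ?_
      filter_upwards [haeP] with y hy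
      rw [hy, hfx]
    have eQ2 : ∫ y, (f x - f y) ^ 2 ∂(Q x) = ∫ y, (f' x - f' y) ^ 2 ∂(Q x) := by
      refine integral_congr_ae ?_
      filter_upwards [haeQ] with y hy
      rw [hy, hfx]
    have eD2 : ∫ y, (f x - f y) ^ 2 ∂(Measure.dirac x)
        = ∫ y, (f' x - f' y) ^ 2 ∂(Measure.dirac x) := by
      refine integral_congr_ae ?_
      filter_upwards [haeD] with y hy
      rw [hy, hfx]
    exact ⟨by rw [hfx, eP, eQ], by rw [eP2, eQ2, eD2]⟩
  have hL : ∫ x, f x * ((∫ y, f y ∂(Q x)) - ∫ y, f y ∂(P x)) ∂π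
      = ∫ x, f' x * ((∫ y, f' y ∂(Q x)) - ∫ y, f' y ∂(P x)) ∂π :=
    integral_congr_ae (key.mono fun x hx => hx.1)
  have hR : ∫ x, ((∫ y, (f x - f y) ^ 2 ∂(Measure.dirac x))
          + (∫ y, (f x - f y) ^ 2 ∂(P x)) - ∫ y, (f x - f y) ^ 2 ∂(Q x)) ∂π
      = ∫ x, ((∫ y, (f' x - f' y) ^ 2 ∂(Measure.dirac x))
          + (∫ y, (f' x - f' y) ^ 2 ∂(P x)) - ∫ y, (f' x - f' y) ^ 2 ∂(Q x)) ∂π :=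
    integral_congr_ae (key.mono fun x hx => hx.2)
  obtain ⟨hpos, heq⟩ := Stmt17Aux.core P Q hbP hbQ hpesk hf'm hf'2
  constructor
  · rw [hL]; exact hpos
  · rw [hL, hR]; exact heq
end
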